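/- A-sequence recurrence for the compression of a double almost-Riordan array: Suppose Ã ∈ K[[t]] satisfies f₁·f₂ = t²·(Ã∘(f₁f₂)), and set a_j := [t^j]Ã. Let d̂_{n,k} := d_{2n−k,k} for 0 ≤ k ≤ n and d̂_{n,k} := 0 for k > n. Then for all n ≥ 2 and all k ≥ 3, d̂_{n,k} = a₀·d̂_{n−2,k−2} + a₁·d̂_{n−1,k} + a₂·d̂_{n,k+2} + ⋯ = Σ_{j≥0} a_j·d̂_{n+j−2, k+2(j−1)}, where the sum has only finitely many nonzero terms (the terms vanish once k+2(j−1) > n+j−2). -/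

import Mathlib

open PowerSeries

variable {K : Type*} [Field K]

/-- Formal substitution `U ∘ h` of a power series `h` (intended with `h(0) = 0`)
into a power series `U`:  `[tⁿ](U∘h) = Σ_{j≤n} ([tʲ]U)·[tⁿ](hʲ)`. -/
noncomputable def psComp (U h : PowerSeries K) : PowerSeries K :=
  PowerSeries.mk fun n => ∑ j ∈ Finset.range (n + 1), coeff j U * coeff n (h ^ j)

/-- The `(n,k)` entry of the double almost-Riordan array `(b | g ; f₁, f₂)`:
column 0 is `b`, column `2ℓ+1` is `t·g·(f₁f₂)^ℓ`, column `2ℓ+2` is `t·g·f₁·(f₁f₂)^ℓ`. -/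
noncomputable def dar (b g f₁ f₂ : PowerSeries K) (n k : ℕ) : K :=
  if k = 0 then coeff n b
  else if k % 2 = 1 then coeff n (X * g * (f₁ * f₂) ^ ((k - 1) / 2))
  else coeff n (X * g * f₁ * (f₁ * f₂) ^ ((k - 2) / 2))

/-- The compression of the double almost-Riordan array: `d̂_{n,k} = d_{2n−k,k}` for `k ≤ n`,
and `0` otherwise. -/
noncomputable def darHat (b g f₁ f₂ : PowerSeries K) (n k : ℕ) : K :=
  if k ≤ n then dar b g f₁ f₂ (2 * n - k) k else 0

noncomputable def col (g f₁ f₂ : PowerSeries K) (k : ℕ) : PowerSeries K :=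
  if k % 2 = 1 then X * g * (f₁ * f₂) ^ ((k - 1) / 2)
  else X * g * f₁ * (f₁ * f₂) ^ ((k - 2) / 2)

lemma col_add_two (g f₁ f₂ : PowerSeries K) (k : ℕ) (hk : 1 ≤ k) :
    col g f₁ f₂ (k + 2) = col g f₁ f₂ k * (f₁ * f₂) := by
  unfold col
  have h2 : (k + 2) % 2 = k % 2 := by omega
  rcases Nat.mod_two_eq_zero_or_one k with h | h
  · rw [h2, h]
    simp only [show (0:ℕ) ≠ 1 by norm_num, if_neg, reduceIte]
    rw [show (k + 2 - 2) / 2 = (k - 2) / 2 + 1 by omega, pow_succ]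
    ring
  · rw [h2, h, if_pos rfl, if_pos rfl,
      show (k + 2 - 1) / 2 = (k - 1) / 2 + 1 by omega, pow_succ]
    ring

lemma col_add (g f₁ f₂ : PowerSeries K) (k : ℕ) (hk : 1 ≤ k) (j : ℕ) :
    col g f₁ f₂ (k + 2 * j) = col g f₁ f₂ k * (f₁ * f₂) ^ j := by
  induction j with
  | zero => simp
  | succ j ih =>
    rw [show k + 2 * (j + 1) = (k + 2 * j) + 2 by ring,
      col_add_two g f₁ f₂ _ (by omega), ih, pow_succ, mul_assoc]

lemma dar_eq_col (b g f₁ f₂ : PowerSeries K) (n k : ℕ) (hk : k ≠ 0) :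
    dar b g f₁ f₂ n k = coeff n (col g f₁ f₂ k) := by
  unfold dar col
  rw [if_neg hk]
  rcases Nat.mod_two_eq_zero_or_one k with h | h
  · rw [h]; simp
  · rw [h]; simp

lemma X_pow_dvd_col (g f₁ f₂ : PowerSeries K)
    (h1 : constantCoeff f₁ = 0) (h2 : constantCoeff f₂ = 0) (k : ℕ) :
    (X : PowerSeries K) ^ k ∣ col g f₁ f₂ k := by
  have hx1 : (X : PowerSeries K) ∣ f₁ := X_dvd_iff.mpr h1
  have hx2 : (X : PowerSeries K) ∣ f₂ := X_dvd_iff.mpr h2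
  have hFF : ∀ m : ℕ, (X : PowerSeries K) ^ (2 * m) ∣ (f₁ * f₂) ^ m := fun m => by
    rw [pow_mul]
    exact pow_dvd_pow_of_dvd (by rw [sq]; exact mul_dvd_mul hx1 hx2) m
  unfold col
  rcases Nat.mod_two_eq_zero_or_one k with h | h
  · rw [h]
    simp only [show (0:ℕ) ≠ 1 by norm_num, reduceIte]
    rcases Nat.eq_zero_or_pos k with rfl | hk
    · simp
    · rw [show (X : PowerSeries K) ^ k = X * X * X ^ (2 * ((k - 2) / 2)) from by
        rw [mul_assoc, ← pow_succ', ← pow_succ']; congr 1; omega]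
      exact mul_dvd_mul (mul_dvd_mul (dvd_mul_right X g) hx1) (hFF _)
  · rw [h, if_pos rfl]
    rw [show (X : PowerSeries K) ^ k = X * X ^ (2 * ((k - 1) / 2)) from by
      rw [← pow_succ']; congr 1; omega]
    exact mul_dvd_mul (dvd_mul_right X g) (hFF _)

lemma coeff_pow_eq_zero {F : PowerSeries K} (hF : constantCoeff F = 0)
    {q j : ℕ} (hq : q < j) : coeff q (F ^ j) = 0 :=
  X_pow_dvd_iff.mp (pow_dvd_pow_of_dvd (X_dvd_iff.mpr hF) j) q hq

lemma coeff_mul_psComp (u A F : PowerSeries K) (hF : constantCoeff F = 0) (m : ℕ) :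
    coeff m (u * psComp A F) =
      ∑ j ∈ Finset.range (m + 1), coeff j A * coeff m (u * F ^ j) := by
  rw [coeff_mul]
  have step1 : ∀ p ∈ Finset.HasAntidiagonal.antidiagonal m,
      coeff p.1 u * coeff p.2 (psComp A F) =
      ∑ j ∈ Finset.range (m + 1), coeff p.1 u * (coeff j A * coeff p.2 (F ^ j)) := by
    intro p hp
    have hp2 : p.2 ≤ m := by
      have := Finset.HasAntidiagonal.antidiagonal.snd_le hp
      omega
    rw [show coeff p.2 (psComp A F) =
        ∑ j ∈ Finset.range (p.2 + 1), coeff j A * coeff p.2 (F ^ j) from coeff_mk _ _,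
      Finset.mul_sum]
    apply Finset.sum_subset
    · intro x hx
      simp only [Finset.mem_range] at *
      omega
    · intro x _ hx
      simp only [Finset.mem_range, not_lt] at hx
      rw [coeff_pow_eq_zero hF (by omega), mul_zero, mul_zero]
  rw [Finset.sum_congr rfl step1, Finset.sum_comm]
  refine Finset.sum_congr rfl fun j _ => ?_
  rw [coeff_mul, Finset.mul_sum]
  refine Finset.sum_congr rfl fun p _ => ?_
  ring


/-- A-sequence recurrence for the compression of a double almost-Riordan array. -/
theorem darHat_A_seq
    (b g f₁ f₂ : PowerSeries K)
    (hbe : ∀ k, coeff (2 * k + 1) b = 0)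
    (hge : ∀ k, coeff (2 * k + 1) g = 0)
    (hb0 : constantCoeff b ≠ 0)
    (hg0 : constantCoeff g ≠ 0)
    (hf₁o : ∀ k, coeff (2 * k) f₁ = 0)
    (hf₂o : ∀ k, coeff (2 * k) f₂ = 0)
    (hf₁1 : coeff 1 f₁ ≠ 0)
    (hf₂1 : coeff 1 f₂ ≠ 0)
    (A : PowerSeries K)
    (hA : f₁ * f₂ = X ^ 2 * psComp A (f₁ * f₂)) :
    ∀ n k : ℕ, 2 ≤ n → 3 ≤ k →
      darHat b g f₁ f₂ n k =
        ∑ᶠ j : ℕ, coeff j A * darHat b g f₁ f₂ (n + j - 2) (k + 2 * j - 2) := by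
  intro n k hn hk
  have hF1 : constantCoeff f₁ = 0 := by simpa using hf₁o 0
  have hF2 : constantCoeff f₂ = 0 := by simpa using hf₂o 0
  have hFF : constantCoeff (f₁ * f₂) = 0 := by rw [map_mul, hF1, zero_mul]
  have hX2j : ∀ j : ℕ, (X : PowerSeries K) ^ (2 * j) ∣ (f₁ * f₂) ^ j := fun j => by
    rw [pow_mul]
    exact pow_dvd_pow_of_dvd
      (by rw [sq]; exact mul_dvd_mul (X_dvd_iff.mpr hF1) (X_dvd_iff.mpr hF2)) j
  by_cases hkn : k ≤ n
  · set m := 2 * n - k - 2 with hm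
    have key : ∀ j : ℕ, darHat b g f₁ f₂ (n + j - 2) (k + 2 * j - 2)
        = coeff m (col g f₁ f₂ (k - 2) * (f₁ * f₂) ^ j) := by
      intro j
      by_cases hj : k + j ≤ n
      · have hle : k + 2 * j - 2 ≤ n + j - 2 := by omega
        rw [darHat, if_pos hle,
          show 2 * (n + j - 2) - (k + 2 * j - 2) = m by omega,
          show k + 2 * j - 2 = (k - 2) + 2 * j by omega,
          dar_eq_col _ _ _ _ _ _ (by omega), col_add _ _ _ _ (by omega)]
      · have hle : ¬ (k + 2 * j - 2 ≤ n + j - 2) := by omega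
        rw [darHat, if_neg hle]
        have hdvd : (X : PowerSeries K) ^ ((k - 2) + 2 * j) ∣
            col g f₁ f₂ (k - 2) * (f₁ * f₂) ^ j := by
          rw [pow_add]
          exact mul_dvd_mul (X_pow_dvd_col g f₁ f₂ hF1 hF2 (k - 2)) (hX2j j)
        exact (X_pow_dvd_iff.mp hdvd m (by omega)).symm
    have hc : col g f₁ f₂ k = col g f₁ f₂ (k - 2) * (f₁ * f₂) := by
      have h := col_add g f₁ f₂ (k - 2) (by omega) 1
      rw [pow_one, show (k - 2) + 2 * 1 = k by omega] at h
      exact h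
    rw [darHat, if_pos hkn, dar_eq_col _ _ _ _ _ _ (by omega), hc, hA,
      show col g f₁ f₂ (k - 2) * (X ^ 2 * psComp A (f₁ * f₂))
        = X ^ 2 * (col g f₁ f₂ (k - 2) * psComp A (f₁ * f₂)) by ring,
      show 2 * n - k = m + 2 by omega, coeff_X_pow_mul,
      coeff_mul_psComp _ _ _ hFF,
      finsum_eq_finset_sum_of_support_subset _ (s := Finset.range (m + 1)) ?_]
    · exact Finset.sum_congr rfl fun j _ => by rw [key j]
    · intro j hj
      simp only [Function.mem_support] at hj
      by_contra hjm
      simp only [Finset.coe_range, Set.mem_Iio, not_lt] at hjm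
      apply hj
      rw [key j, X_pow_dvd_iff.mp ((hX2j j).trans (dvd_mul_left _ _)) m (by omega), mul_zero]
  · rw [darHat, if_neg hkn]
    have hz : ∀ j : ℕ, coeff j A * darHat b g f₁ f₂ (n + j - 2) (k + 2 * j - 2) = 0 := by
      intro j
      rw [darHat, if_neg (by omega), mul_zero]
    rw [finsum_congr hz, finsum_zero]
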